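/- For odd n ≥ 3, ⟨e_j, ω_i⟩ = 0 if and only if i ≡ j + (n+1)/2 (mod n) or i ≡ j + (n−1)/2 (mod n), and ⟨e_j, ω_i⟩ = 1 if and only if i ≡ j (mod n). -/

import Mathlib

open Real

noncomputable def rn (n : ℕ) : ℝ := Real.sqrt (1 / Real.cos (π / n))

noncomputable def ωst (n : ℕ) (i : ℤ) : Fin 3 → ℝ :=
  ![rn n * Real.cos (2 * π * (i : ℝ) / n), rn n * Real.sin (2 * π * (i : ℝ) / n), 1]

noncomputable def eEv (n : ℕ) (j : ℤ) : Fin 3 → ℝ :=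
  ![rn n * Real.cos ((2 * (j : ℝ) - 1) * π / n) / 2,
    rn n * Real.sin ((2 * (j : ℝ) - 1) * π / n) / 2, 1 / 2]

noncomputable def eOd (n : ℕ) (j : ℤ) : Fin 3 → ℝ :=
  (1 / (1 + rn n ^ 2)) •
    ![rn n * Real.cos (2 * π * (j : ℝ) / n), rn n * Real.sin (2 * π * (j : ℝ) / n), 1]

noncomputable def ip (v w : Fin 3 → ℝ) : ℝ := v 0 * w 0 + v 1 * w 1 + v 2 * w 2

noncomputable def uE : Fin 3 → ℝ := ![0, 0, 1]

theorem ngon_odd_saturation (n : ℕ) (hn : Odd n) (h3 : 3 ≤ n) (i j : ℤ) :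
    (ip (eOd n j) (ωst n i) = 0 ↔
      (i ≡ j + ((n : ℤ) + 1) / 2 [ZMOD (n : ℤ)] ∨ i ≡ j + ((n : ℤ) - 1) / 2 [ZMOD (n : ℤ)])) ∧
    (ip (eOd n j) (ωst n i) = 1 ↔ i ≡ j [ZMOD (n : ℤ)]) := by
  obtain ⟨q, hq⟩ := hn
  have hqn : (n:ℤ) = 2 * q + 1 := by exact_mod_cast hq
  have hnR : (0:ℝ) < n := by positivity
  have hnR' : (n:ℝ) ≠ 0 := ne_of_gt hnR
  have hπ : (0:ℝ) < π := Real.pi_pos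
  have hπ' : π ≠ 0 := ne_of_gt hπ
  have hlt : π / n < π / 2 := by
    apply div_lt_div_of_pos_left hπ (by norm_num)
    exact_mod_cast by omega
  have hc : 0 < Real.cos (π / n) := by
    apply Real.cos_pos_of_mem_Ioo
    constructor
    · linarith [div_pos hπ hnR]
    · exact hlt
  have hr2 : rn n ^ 2 = 1 / Real.cos (π / n) := Real.sq_sqrt (by positivity)
  have hr2pos : 0 < rn n ^ 2 := by rw [hr2]; positivity
  have hd : (0:ℝ) < 1 + rn n ^ 2 := by linarith
  have hqnR : (n:ℝ) = 2 * (q:ℝ) + 1 := by exact_mod_cast hq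
  set m : ℤ := i - j with hm
  set θ : ℝ := 2 * π * (m:ℝ) / n with hθ
  have key : ip (eOd n j) (ωst n i) = (rn n ^ 2 * Real.cos θ + 1) / (1 + rn n ^ 2) := by
    have expand : θ = 2 * π * (i:ℝ) / n - 2 * π * (j:ℝ) / n := by
      rw [hθ, hm]; push_cast; ring
    rw [expand, Real.cos_sub]
    simp only [ip, eOd, ωst, Pi.smul_apply, Matrix.cons_val_zero, Matrix.cons_val_one,
      Matrix.head_cons, smul_eq_mul, Matrix.cons_val_two, Matrix.tail_cons]
    field_simp
  have hdiv1 : ((n:ℤ) + 1) / 2 = q + 1 := by omega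
  have hdiv2 : ((n:ℤ) - 1) / 2 = q := by omega
  constructor
  · -- zero case
    rw [key, div_eq_zero_iff]
    have step1 : (rn n ^ 2 * Real.cos θ + 1 = 0 ∨ 1 + rn n ^ 2 = 0) ↔
        Real.cos θ = Real.cos (π - π / n) := by
      rw [Real.cos_pi_sub]
      constructor
      · rintro (h | h)
        · rw [hr2] at h
          field_simp at h
          linarith
        · linarith
      · intro h
        left
        rw [hr2, h]
        field_simp
        norm_num
    rw [step1, Real.cos_eq_cos_iff, hdiv1, hdiv2, Int.modEq_iff_dvd, Int.modEq_iff_dvd]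
    constructor
    · rintro ⟨k, hA | hB⟩
      · -- π - π/n = 2kπ + θ  ⇒  m = q - k n  ⇒  right disjunct
        rw [hθ] at hA
        field_simp at hA
        have h2 : π * ((n:ℝ) - 1) = π * (2*(k:ℝ)*n + 2*(m:ℝ)) := by linear_combination π * hA
        have h3' : (n:ℝ) - 1 = 2*(k:ℝ)*n + 2*(m:ℝ) := mul_left_cancel₀ hπ' h2
        have hR : (m:ℝ) = (q:ℝ) - (k:ℝ)*(n:ℝ) := by linarith [h3']
        have hZ : m = q - k * n := by exact_mod_cast hR
        right
        exact ⟨k, by linear_combination -hZ - hm⟩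
      · -- π - π/n = 2kπ - θ  ⇒  m = k n - q  ⇒  left disjunct
        rw [hθ] at hB
        field_simp at hB
        have h2 : π * ((n:ℝ) - 1) = π * (2*(k:ℝ)*n - 2*(m:ℝ)) := by linear_combination π * hB
        have h3' : (n:ℝ) - 1 = 2*(k:ℝ)*n - 2*(m:ℝ) := mul_left_cancel₀ hπ' h2
        have hR : (m:ℝ) = (k:ℝ)*(n:ℝ) - (q:ℝ) := by linarith [h3']
        have hZ : m = k * n - q := by exact_mod_cast hR
        left
        exact ⟨1 - k, by linear_combination -hZ - hqn + hm⟩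
    · rintro (⟨t, ht⟩ | ⟨t, ht⟩)
      · -- m = q + 1 - n t ; use branch  2(1-t)π - θ
        have hZ : m = q + 1 - n * t := by linear_combination -ht + hm
        have hmR : (m:ℝ) = (q:ℝ) + 1 - (n:ℝ) * t := by exact_mod_cast hZ
        refine ⟨1 - t, Or.inr ?_⟩
        rw [hθ, hmR]
        push_cast
        field_simp
        linear_combination -hqnR
      · -- m = q - n t ; use branch 2tπ + θ
        have hZ : m = q - n * t := by linear_combination -ht + hm
        have hmR : (m:ℝ) = (q:ℝ) - (n:ℝ) * t := by exact_mod_cast hZ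
        refine ⟨t, Or.inl ?_⟩
        rw [hθ, hmR]
        push_cast
        field_simp
        linear_combination hqnR
  · -- one case
    rw [key, div_eq_one_iff_eq (ne_of_gt hd)]
    have step1 : rn n ^ 2 * Real.cos θ + 1 = 1 + rn n ^ 2 ↔ Real.cos θ = 1 := by
      constructor
      · intro h
        have : rn n ^ 2 * Real.cos θ = rn n ^ 2 * 1 := by linarith
        exact mul_left_cancel₀ (ne_of_gt hr2pos) this
      · intro h; rw [h]; ring
    rw [step1, Real.cos_eq_one_iff, Int.modEq_iff_dvd]
    constructor
    · rintro ⟨k, hk⟩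
      rw [hθ] at hk
      field_simp at hk
      have h2 : π * ((m:ℝ)) = π * ((k:ℝ)*n) := by linear_combination -π * hk
      have hR : (m:ℝ) = (k:ℝ)*(n:ℝ) := mul_left_cancel₀ hπ' h2
      have hZ : m = k * n := by exact_mod_cast hR
      exact ⟨-k, by linear_combination -hZ + hm⟩
    · rintro ⟨t, ht⟩
      have hZ : m = -(n * t) := by linear_combination -ht + hm
      have hmR : (m:ℝ) = -((n:ℝ) * t) := by exact_mod_cast hZ
      refine ⟨-t, ?_⟩
      rw [hθ, hmR]
      push_cast
      field_simp
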